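/- Let k be a (not necessarily commutative) unital ring, n ≥ 2 an integer, and i ∈ {1,…,n}. In the category RingCat of unital rings, the commutative square with top arrow πᵢ : kⁿ → k (projection onto the i-th coordinate), left arrow d : kⁿ → Mₙ(k) (the diagonal embedding), and with both remaining arrows the unique ring homomorphisms to the trivial (zero) ring, is a pushout square. -/

import Mathlib

universe u

/-- The unique ring homomorphism from a ring to the trivial (one-element) ring. -/
def toTrivialRingHom (R : Type u) [Ring R] : R →+* PUnit.{u + 1} where
  toFun _ := PUnit.unit
  map_one' := rfl
  map_mul' _ _ := rfl
  map_zero' := rfl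
  map_add' _ _ := rfl

open Matrix CategoryTheory Limits in
lemma key_subsingleton {k X : Type*} [Ring k] [Ring X] {n : ℕ} (hn : 2 ≤ n) (i : Fin n)
    (f : k →+* X) (g : Matrix (Fin n) (Fin n) k →+* X)
    (h : ∀ a : Fin n → k, f (a i) = g (Matrix.diagonal a)) :
    Subsingleton X := by
  have : Nontrivial (Fin n) := Fin.nontrivial_iff_two_le.mpr hn
  obtain ⟨j, hj⟩ := exists_ne i
  have hdiag : Matrix.diagonal (Pi.single i (1 : k)) = Matrix.single i i 1 := by
    ext a b
    by_cases hab : a = b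
    · subst hab
      by_cases hia : i = a
      · subst hia; simp [Matrix.diagonal_apply, Matrix.single]
      · simp [Matrix.diagonal_apply, Matrix.single, hia,
          Pi.single_apply, fun h : a = i => hia h.symm]
    · rw [Matrix.diagonal_apply_ne _ hab]
      simp only [Matrix.single, Matrix.of_apply]
      rw [if_neg]
      rintro ⟨rfl, rfl⟩
      exact hab rfl
  have hE : g (Matrix.single i i (1 : k)) = 1 := by
    have := h (Pi.single i 1)
    rw [Pi.single_eq_same, _root_.map_one, hdiag] at this
    exact this.symm
  have hF : g (Matrix.single j j (1 : k)) = 0 := by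
    have h0 : Matrix.single i i (1 : k) * Matrix.single j j 1 = 0 :=
      Matrix.single_mul_single_of_ne (c := (1 : k)) i i j hj.symm 1
    calc g (Matrix.single j j (1 : k))
        = g (Matrix.single i i 1) * g (Matrix.single j j 1) := by rw [hE, one_mul]
      _ = g (Matrix.single i i 1 * Matrix.single j j 1) := (_root_.map_mul g _ _).symm
      _ = 0 := by rw [h0, map_zero]
  have hAB : g (Matrix.single i j (1 : k)) * g (Matrix.single j i 1) = 1 := by
    rw [← _root_.map_mul, Matrix.single_mul_single_same, one_mul, hE]
  have hBA : g (Matrix.single j i (1 : k)) * g (Matrix.single i j 1) = 0 := by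
    rw [← _root_.map_mul, Matrix.single_mul_single_same, one_mul, hF]
  have h01 : (0 : X) = 1 := by
    calc (0 : X) = g (Matrix.single i j 1) * (g (Matrix.single j i 1) * g (Matrix.single i j 1)) * g (Matrix.single j i 1) := by
          rw [hBA, mul_zero, zero_mul]
      _ = (g (Matrix.single i j 1) * g (Matrix.single j i 1)) * (g (Matrix.single i j 1) * g (Matrix.single j i 1)) := by
          simp only [mul_assoc]
      _ = 1 := by rw [hAB, one_mul]
  exact subsingleton_of_zero_eq_one h01

open CategoryTheory Limits in
theorem stmt_1 (k : Type u) [Ring k] (n : ℕ) (hn : 2 ≤ n) (i : Fin n) :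
    CategoryTheory.IsPushout
      (RingCat.ofHom (Pi.evalRingHom (fun _ : Fin n => k) i))
      (RingCat.ofHom (Matrix.diagonalRingHom (Fin n) k))
      (RingCat.ofHom (toTrivialRingHom k))
      (RingCat.ofHom (toTrivialRingHom (Matrix (Fin n) (Fin n) k))) := by
  constructor
  case toCommSq => constructor; ext x
  constructor
  apply PushoutCocone.IsColimit.mk _ (fun s => ?_) (fun s => ?_) (fun s => ?_) (fun s m h1 h2 => ?_)
  · have hsub : Subsingleton s.pt := by
      apply key_subsingleton (k := k) hn i s.inl.hom s.inr.hom
      intro a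
      have := congrArg (fun φ => φ a) s.condition
      simpa using this
    exact RingCat.ofHom
      { toFun := fun _ => 1
        map_one' := rfl
        map_mul' := fun _ _ => Subsingleton.elim _ _
        map_zero' := Subsingleton.elim _ _
        map_add' := fun _ _ => Subsingleton.elim _ _ }
  · have hsub : Subsingleton s.pt := by
      apply key_subsingleton (k := k) hn i s.inl.hom s.inr.hom
      intro a
      have := congrArg (fun φ => φ a) s.condition
      simpa using this
    ext x
    exact Subsingleton.elim _ _
  · have hsub : Subsingleton s.pt := by
      apply key_subsingleton (k := k) hn i s.inl.hom s.inr.hom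
      intro a
      have := congrArg (fun φ => φ a) s.condition
      simpa using this
    ext x
    exact Subsingleton.elim _ _
  · have hsub : Subsingleton s.pt := by
      apply key_subsingleton (k := k) hn i s.inl.hom s.inr.hom
      intro a
      have := congrArg (fun φ => φ a) s.condition
      simpa using this
    ext x
    exact Subsingleton.elim _ _
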